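/- Let G = T wr S_k = T^k : S_k be a wreath product of a finite group T with S_k acting by permuting coordinates, with base group M = T_1 × ... × T_k. Suppose G = AB with A ≅ B (proper subgroups), and A projects onto a transitive subgroup of S_k (i.e., A acts transitively on {T_1,...,T_k} by conjugation). Then for any odd prime p dividing |T|, the p-part of the first coordinate projection of A ∩ M satisfies |φ_1(A ∩ M)|_p^2 ≥ |T|_p. -/

import Mathlib

open scoped Pointwise

/-- The permutation action of `S_k` on `Fin k → T` by permuting coordinates, as a
homomorphism into the automorphism group (used to build the wreath product). -/
def permCoordAut (T : Type*) [Group T] (k : ℕ) :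
    Equiv.Perm (Fin k) →* MulAut (Fin k → T) where
  toFun g := MulEquiv.arrowCongr g (MulEquiv.refl T)
  map_one' := by ext f i; rfl
  map_mul' g h := by ext f i; rfl

/-- The wreath product `T wr S_k` as a semidirect product `(Fin k → T) ⋊ S_k`. -/
abbrev WreathProductSk (T : Type*) [Group T] (k : ℕ) :=
  SemidirectProduct (Fin k → T) (Equiv.Perm (Fin k)) (permCoordAut T k)

/-- The projection `φ_i(A ∩ M)` of `A ∩ M` to the `i`-th component of the base group
`M` of the wreath product, as a subgroup of `T`. -/
def baseProjection {T : Type*} [Group T] {k : ℕ} (A : Subgroup (WreathProductSk T k))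
    (i : Fin k) : Subgroup T :=
  ((A ⊓ SemidirectProduct.inl.range).comap SemidirectProduct.inl).map
    (Pi.evalMonoidHom (fun _ : Fin k => T) i)

/-- `N ⋊[φ] H` is equivalent (as a type) to `N × H`. -/
def sdpEquivProd {N H : Type*} [Group N] [Group H] (φ : H →* MulAut N) :
    (SemidirectProduct N H φ) ≃ N × H where
  toFun x := (x.left, x.right)
  invFun p := ⟨p.1, p.2⟩
  left_inv x := rfl
  right_inv p := rfl

lemma mem_baseProjection {T : Type*} [Group T] {k : ℕ} {A : Subgroup (WreathProductSk T k)}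
    {i : Fin k} {x : T} :
    x ∈ baseProjection A i ↔ ∃ g : Fin k → T, SemidirectProduct.inl g ∈ A ∧ g i = x := by
  simp only [baseProjection, Subgroup.mem_map, Subgroup.mem_comap, Subgroup.mem_inf,
    Pi.evalMonoidHom_apply, MonoidHom.mem_range]
  constructor
  · rintro ⟨g, ⟨hgA, _⟩, rfl⟩; exact ⟨g, hgA, rfl⟩
  · rintro ⟨g, hgA, rfl⟩; exact ⟨g, ⟨hgA, ⟨g, rfl⟩⟩, rfl⟩

lemma conj_inl {T : Type*} [Group T] {k : ℕ} (a : WreathProductSk T k) (g : Fin k → T) :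
    a * SemidirectProduct.inl g * a⁻¹
      = SemidirectProduct.inl (fun j => a.left j * g (a.right⁻¹ j) * (a.left j)⁻¹) := by
  refine SemidirectProduct.ext ?_ ?_
  · funext j
    show (a.left * (permCoordAut T k a.right) g) j *
        ((permCoordAut T k ((a.right * 1))) ((permCoordAut T k a.right⁻¹) a.left⁻¹)) j = _
    simp only [mul_one]
    have : (permCoordAut T k a.right) ((permCoordAut T k a.right⁻¹) a.left⁻¹) = a.left⁻¹ := by
      rw [← MulAut.mul_apply, ← map_mul, mul_inv_cancel, map_one, MulAut.one_apply]
    rw [this]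
    rfl
  · simp

lemma card_baseProjection_le {T : Type*} [Group T] [Finite T] {k : ℕ}
    {A : Subgroup (WreathProductSk T k)} {i j : Fin k}
    (h : ∃ σ ∈ A.map SemidirectProduct.rightHom, σ i = j) :
    Nat.card (baseProjection A i) ≤ Nat.card (baseProjection A j) := by
  obtain ⟨σ, hσ, hij⟩ := h
  rw [Subgroup.mem_map] at hσ
  obtain ⟨a, haA, hra⟩ := hσ
  have har : a.right = σ := hra
  have hmaps : (baseProjection A i).map (MulAut.conj (a.left j)).toMonoidHom ≤
      baseProjection A j := by
    rintro _ ⟨x, hx, rfl⟩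
    obtain ⟨g, hgA, rfl⟩ := mem_baseProjection.mp hx
    simp only [MulEquiv.coe_toMonoidHom, MulAut.conj_apply]
    rw [mem_baseProjection]
    refine ⟨fun j' => a.left j' * g (a.right⁻¹ j') * (a.left j')⁻¹, ?_, ?_⟩
    · rw [← conj_inl]
      exact A.mul_mem (A.mul_mem haA hgA) (A.inv_mem haA)
    · have hji : a.right⁻¹ j = i := by
        rw [har]; exact σ.symm_apply_eq.mpr hij.symm
      show a.left j * g (a.right⁻¹ j) * (a.left j)⁻¹ = _
      rw [hji]
  calc Nat.card (baseProjection A i)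
      = Nat.card ((baseProjection A i).map (MulAut.conj (a.left j)).toMonoidHom) :=
        Nat.card_congr (Subgroup.equivMapOfInjective _ _
          (MulAut.conj (a.left j)).injective).toEquiv
    _ ≤ Nat.card (baseProjection A j) :=
        Nat.le_of_dvd Nat.card_pos (Subgroup.card_dvd_of_le hmaps)

theorem wreath_homogeneous_factorisation_p_part {T : Type*} [Group T] [Finite T]
    (k : ℕ) (hk : 0 < k)
    (A B : Subgroup (WreathProductSk T k)) (hA : A ≠ ⊤) (hB : B ≠ ⊤)
    (hiso : Nonempty (A ≃* B))
    (hfact : (A : Set (WreathProductSk T k)) * (B : Set (WreathProductSk T k)) =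
      Set.univ)
    (htrans : ∀ i j : Fin k, ∃ σ ∈ A.map SemidirectProduct.rightHom, σ i = j)
    (p : ℕ) (hp : p.Prime) (hodd : Odd p) (hpT : p ∣ Nat.card T) :
    (Nat.card T).factorization p ≤
      2 * (Nat.card (baseProjection A ⟨0, hk⟩)).factorization p := by
  classical
  haveI : Fact p.Prime := ⟨hp⟩
  haveI hfinG : Finite (WreathProductSk T k) :=
    Finite.of_equiv _ (sdpEquivProd (permCoordAut T k)).symm
  set i0 : Fin k := ⟨0, hk⟩ with hi0
  -- all projections have the same cardinality
  have hsame : ∀ i : Fin k, Nat.card (baseProjection A i) = Nat.card (baseProjection A i0) :=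
    fun i => le_antisymm (card_baseProjection_le (htrans i i0))
      (card_baseProjection_le (htrans i0 i))
  -- notation
  set nT := Nat.card T with hnT
  set n0 := Nat.card (baseProjection A i0) with hn0
  set nA := Nat.card A with hnA
  -- Step: card of A∩M divides n0^k
  set K : Subgroup (Fin k → T) :=
    (A ⊓ SemidirectProduct.inl.range).comap SemidirectProduct.inl with hK
  have hKpi : K ≤ Subgroup.pi Set.univ (baseProjection A) := by
    intro g hg
    rw [Subgroup.mem_pi]
    intro i _
    rw [mem_baseProjection]
    exact ⟨g, (Subgroup.mem_inf.mp (Subgroup.mem_comap.mp hg)).1, rfl⟩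
  have hcardpi : Nat.card (Subgroup.pi Set.univ (baseProjection A)) = n0 ^ k := by
    have e : (Subgroup.pi Set.univ (baseProjection A)) ≃ ∀ i, baseProjection A i :=
      { toFun := fun f i => ⟨f.1 i, f.2 i (Set.mem_univ i)⟩
        invFun := fun v => ⟨fun i => v i, fun i _ => (v i).2⟩
        left_inv := fun f => rfl
        right_inv := fun v => rfl }
    rw [Nat.card_congr e, Nat.card_pi]
    calc ∏ i, Nat.card (baseProjection A i) = ∏ _i : Fin k, n0 :=
          Finset.prod_congr rfl (fun i _ => hsame i)
      _ = n0 ^ k := by simp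
  have hKdvd : Nat.card K ∣ n0 ^ k := by
    rw [← hcardpi]
    exact Subgroup.card_dvd_of_le hKpi
  -- card (A ⊓ M) = card K
  have hKcard : Nat.card (A ⊓ SemidirectProduct.inl.range : Subgroup (WreathProductSk T k))
      = Nat.card K := by
    have : Subgroup.map SemidirectProduct.inl K = A ⊓ SemidirectProduct.inl.range :=
      Subgroup.map_comap_eq_self (le_trans inf_le_right le_rfl)
    rw [← this]
    exact (Nat.card_congr (Subgroup.equivMapOfInjective K _
      SemidirectProduct.inl_injective).toEquiv).symm
  -- card A = card (A.map rightHom) * card (A ⊓ M)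
  set R := A.map (SemidirectProduct.rightHom
    (φ := permCoordAut T k)) with hR
  have hAfact : nA = Nat.card R *
      Nat.card (A ⊓ SemidirectProduct.inl.range : Subgroup (WreathProductSk T k)) := by
    set f := (SemidirectProduct.rightHom (φ := permCoordAut T k)).comp A.subtype with hf
    have h1 : Nat.card A = Nat.card (A ⧸ f.ker) * Nat.card f.ker :=
      Subgroup.card_eq_card_quotient_mul_card_subgroup f.ker
    have h2 : Nat.card (A ⧸ f.ker) = Nat.card R := by
      rw [Nat.card_congr (QuotientGroup.quotientKerEquivRange f).toEquiv]
      congr 1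
      rw [hf, MonoidHom.range_comp, Subgroup.range_subtype, hR]
    have h3 : Nat.card f.ker =
        Nat.card (A ⊓ SemidirectProduct.inl.range : Subgroup (WreathProductSk T k)) := by
      have hker : f.ker = ((A ⊓ SemidirectProduct.inl.range :
          Subgroup (WreathProductSk T k))).subgroupOf A := by
        ext x
        simp only [hf, MonoidHom.mem_ker, MonoidHom.comp_apply, Subgroup.mem_subgroupOf,
          Subgroup.mem_inf, Subgroup.coe_subtype]
        rw [SemidirectProduct.range_inl_eq_ker_rightHom, MonoidHom.mem_ker]
        exact ⟨fun h => ⟨x.2, h⟩, fun h => h.2⟩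
      rw [hker]
      exact Nat.card_congr (Subgroup.subgroupOfEquivOfLe inf_le_left).toEquiv
    rw [hnA, h1, h2, h3]
  -- card R divides k!
  have hRdvd : Nat.card R ∣ k.factorial := by
    calc Nat.card R ∣ Nat.card (Equiv.Perm (Fin k)) := Subgroup.card_subgroup_dvd_card R
      _ = k.factorial := by
          rw [Nat.card_eq_fintype_card, Fintype.card_perm, Fintype.card_fin]
  -- nA divides k! * n0^k
  have hnAdvd : nA ∣ k.factorial * n0 ^ k := by
    rw [hAfact, hKcard]
    exact mul_dvd_mul hRdvd hKdvd
  -- card G = nT^k * k!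
  have hG : Nat.card (WreathProductSk T k) = nT ^ k * k.factorial := by
    rw [Nat.card_congr (sdpEquivProd (permCoordAut T k)), Nat.card_prod, Nat.card_pi]
    simp [Nat.card_eq_fintype_card, Fintype.card_perm]
    exact Or.inl rfl
  -- card G divides nA * nA
  have hGdvd : Nat.card (WreathProductSk T k) ∣ nA * nA := by
    have hBA : Nat.card B = nA := (Nat.card_congr hiso.some.toEquiv).symm
    -- |G| = |G/B| * |B| and |G/B| divides |A|
    have h1 : Nat.card (WreathProductSk T k) =
        Nat.card (WreathProductSk T k ⧸ B) * Nat.card B :=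
      Subgroup.card_eq_card_quotient_mul_card_subgroup B
    have h2 : Nat.card (WreathProductSk T k ⧸ B) ∣ nA := by
      -- the orbit of the identity coset under A is everything
      have horb : MulAction.orbit A
          (QuotientGroup.mk (1 : WreathProductSk T k) : WreathProductSk T k ⧸ B) =
          Set.univ := by
        ext x
        simp only [Set.mem_univ, iff_true]
        induction x using QuotientGroup.induction_on with
        | H g =>
          have hg : g ∈ (A : Set (WreathProductSk T k)) * (B : Set (WreathProductSk T k)) := by
            rw [hfact]; trivial
          obtain ⟨a, ha, b, hb, rfl⟩ := hg
          refine ⟨⟨a, ha⟩, ?_⟩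
          show (a : WreathProductSk T k) •
              (QuotientGroup.mk (1 : WreathProductSk T k) : WreathProductSk T k ⧸ B) =
              QuotientGroup.mk (a * b)
          rw [MulAction.Quotient.smul_mk]
          apply (QuotientGroup.eq).mpr
          simpa using hb
      have hcards : Nat.card (WreathProductSk T k ⧸ B) =
          Nat.card (MulAction.orbit A
            (QuotientGroup.mk (1 : WreathProductSk T k) : WreathProductSk T k ⧸ B)) := by
        rw [horb]
        exact (Nat.card_congr (Equiv.Set.univ _)).symm
      rw [hcards, Nat.card_congr (MulAction.orbitEquivQuotientStabilizer A _),
        ← Subgroup.index_eq_card]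
      exact Subgroup.index_dvd_card _
    rw [h1, hBA]
    exact mul_dvd_mul h2 dvd_rfl
  -- put it together with factorizations
  have hn0pos : 0 < n0 := Nat.card_pos
  have hnApos : 0 < nA := Nat.card_pos
  have hnTpos : 0 < nT := Nat.card_pos
  have hkfpos : 0 < k.factorial := Nat.factorial_pos k
  have hdvd : nT ^ k * k.factorial ∣ (k.factorial * n0 ^ k) ^ 2 := by
    calc nT ^ k * k.factorial ∣ nA * nA := hG ▸ hGdvd
      _ ∣ (k.factorial * n0 ^ k) * (k.factorial * n0 ^ k) := mul_dvd_mul hnAdvd hnAdvd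
      _ = (k.factorial * n0 ^ k) ^ 2 := (sq _).symm
  have hfle := (Nat.factorization_le_iff_dvd (by positivity) (by positivity)).mpr hdvd p
  rw [Nat.factorization_mul (by positivity) (by positivity),
      Nat.factorization_pow, Nat.factorization_pow,
      Nat.factorization_mul (by positivity) (by positivity), Nat.factorization_pow] at hfle
  simp only [Finsupp.coe_add, Finsupp.coe_smul, Pi.add_apply, Pi.smul_apply,
    smul_eq_mul] at hfle
  -- hfle : k * nT.factorization p + (k.factorial).factorization p
  --        ≤ 2 * ((k.factorial).factorization p + k * n0.factorization p)
  set t := nT.factorization p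
  set fv := n0.factorization p
  set e := (k.factorial).factorization p
  have he : 2 * e ≤ k := by
    have hfac : (p - 1) * padicValNat p (k.factorial) = k - (p.digits k).sum :=
      sub_one_mul_padicValNat_factorial k
    have hef : e = padicValNat p (k.factorial) := Nat.factorization_def _ hp
    have hp3 : 3 ≤ p := by
      have h2t := hp.two_le
      have ho := Nat.odd_iff.mp hodd
      omega
    have h2 : 2 * e ≤ (p - 1) * padicValNat p (k.factorial) := by
      rw [← hef]; exact Nat.mul_le_mul_right e (by omega)
    omega
  by_contra hcon
  push_neg at hcon
  have h1 : k * (2 * fv + 1) ≤ k * t := Nat.mul_le_mul_left k hcon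
  have h2 : k * (2 * fv + 1) = 2 * (k * fv) + k := by ring
  nlinarith [hfle, he, hk, h1, h2]
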